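/- For every finite simple graph G, mr(G, F₂) = min{ c₂(G), 2·t₂(G) }. -/

import Mathlib

open Matrix

/-- A subgraph complementation system for `G`: a finite collection (multiset) of subsets of
vertices such that two distinct vertices are adjacent iff they lie together in an odd
number of the sets. -/
def IsSCS {V : Type*} [DecidableEq V] (G : SimpleGraph V) (𝒞 : Multiset (Finset V)) : Prop :=
  ∀ u v : V, u ≠ v →
    (G.Adj u v ↔ Odd (Multiset.card (𝒞.filter (fun C => u ∈ C ∧ v ∈ C))))

/-- The subgraph complementation number `c₂(G)`: the minimum cardinality of a subgraph
complementation system for `G`. -/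
noncomputable def c2 {V : Type*} [DecidableEq V] (G : SimpleGraph V) : ℕ :=
  sInf {k | ∃ 𝒞 : Multiset (Finset V), IsSCS G 𝒞 ∧ Multiset.card 𝒞 = k}

/-- A symmetric matrix over `F₂` fits `G` if its off-diagonal entries record adjacency. -/
def FitsF2 {V : Type*} (G : SimpleGraph V) (A : Matrix V V (ZMod 2)) : Prop :=
  A.IsSymm ∧ ∀ u v : V, u ≠ v → (A u v = 1 ↔ G.Adj u v)

/-- The minimum rank of `G` over `F₂`: the minimum rank of a symmetric matrix over `F₂`
that fits `G`. -/
noncomputable def mrF2 {V : Type*} [Fintype V] (G : SimpleGraph V) : ℕ :=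
  sInf {k | ∃ A : Matrix V V (ZMod 2), FitsF2 G A ∧ A.rank = k}

/-- Adjacency in the complete tripartite graph with parts `P.1`, `P.2.1`, `P.2.2`:
two vertices are adjacent exactly when they lie in two different parts. -/
def TripAdj {V : Type*} (P : Finset V × Finset V × Finset V) (u v : V) : Prop :=
  (u ∈ P.1 ∧ v ∈ P.2.1) ∨ (u ∈ P.2.1 ∧ v ∈ P.1) ∨
  (u ∈ P.1 ∧ v ∈ P.2.2) ∨ (u ∈ P.2.2 ∧ v ∈ P.1) ∨
  (u ∈ P.2.1 ∧ v ∈ P.2.2) ∨ (u ∈ P.2.2 ∧ v ∈ P.2.1)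

instance {V : Type*} [DecidableEq V] (P : Finset V × Finset V × Finset V) (u v : V) :
    Decidable (TripAdj P u v) := by unfold TripAdj; infer_instance

/-- A system of `l` complete tripartite graphs (each given by three pairwise disjoint parts)
whose symmetric difference of edge sets is the edge set of `G`. -/
def IsTripartiteSystem {V : Type*} [Fintype V] [DecidableEq V] (G : SimpleGraph V)
    {l : ℕ} (T : Fin l → Finset V × Finset V × Finset V) : Prop :=
  (∀ i, Disjoint (T i).1 (T i).2.1 ∧ Disjoint (T i).1 (T i).2.2 ∧
    Disjoint (T i).2.1 (T i).2.2) ∧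
  ∀ u v : V, u ≠ v →
    (G.Adj u v ↔ Odd (Finset.univ.filter (fun i => TripAdj (T i) u v)).card)

/-- The tripartite subgraph complementation number `t₂(G)`. -/
noncomputable def t2 {V : Type*} [Fintype V] [DecidableEq V] (G : SimpleGraph V) : ℕ :=
  sInf {l | ∃ T : Fin l → Finset V × Finset V × Finset V, IsTripartiteSystem G T}

set_option linter.unusedSectionVars false

namespace SCSAux

variable {V : Type*} [Fintype V] [DecidableEq V]

/-- rank-one symmetric matrix -/
def r1 (x : V → ZMod 2) : Matrix V V (ZMod 2) := Matrix.vecMulVec x x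

/-- hyperbolic pair matrix -/
def hyp (x y : V → ZMod 2) : Matrix V V (ZMod 2) :=
  Matrix.vecMulVec x y + Matrix.vecMulVec y x

lemma z2 (a : ZMod 2) : a = 0 ∨ a = 1 := by revert a; decide

lemma z2add (a b : ZMod 2) : b + (a + b) = a := by revert a b; decide

lemma mul_eq_one_iff (a b : ZMod 2) : a * b = 1 ↔ a = 1 ∧ b = 1 := by revert a b; decide

lemma vecMulVec_mulVec (x y f : V → ZMod 2) :
    (Matrix.vecMulVec x y).mulVec f = (∑ j, y j * f j) • x := by
  ext i
  simp only [Matrix.mulVec, dotProduct, Matrix.vecMulVec_apply, Pi.smul_apply,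
    smul_eq_mul, Finset.sum_mul]
  exact Finset.sum_congr rfl fun j _ => by ring

lemma isSymm_r1 (x : V → ZMod 2) : (r1 x).IsSymm := by
  ext i j; simp [r1, Matrix.transpose_apply, Matrix.vecMulVec_apply, mul_comm]

lemma isSymm_hyp (x y : V → ZMod 2) : (hyp x y).IsSymm := by
  ext i j; simp only [hyp, Matrix.transpose_apply, Matrix.add_apply, Matrix.vecMulVec_apply]
  ring

lemma isSymm_listSum (L : List (Matrix V V (ZMod 2))) (h : ∀ M ∈ L, M.IsSymm) :
    L.sum.IsSymm := by
  induction L with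
  | nil => simp [Matrix.IsSymm]
  | cons M L ih =>
    rw [List.sum_cons]
    exact (h M (by simp)).add (ih fun N hN => h N (by simp [hN]))

lemma rank_add_le' (A B : Matrix V V (ZMod 2)) : (A + B).rank ≤ A.rank + B.rank := by
  have hle : LinearMap.range (A + B).mulVecLin ≤
      LinearMap.range A.mulVecLin ⊔ LinearMap.range B.mulVecLin := by
    rintro w ⟨f, rfl⟩
    rw [Matrix.mulVecLin_apply, Matrix.add_mulVec]
    exact Submodule.add_mem_sup ⟨f, rfl⟩ ⟨f, rfl⟩
  calc (A + B).rank ≤ Module.finrank (ZMod 2)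
        (LinearMap.range A.mulVecLin ⊔ LinearMap.range B.mulVecLin : Submodule (ZMod 2) (V → ZMod 2)) :=
        Submodule.finrank_mono hle
    _ ≤ A.rank + B.rank := Submodule.finrank_add_le_finrank_add_finrank _ _

lemma rank_r1_le (x : V → ZMod 2) : (r1 x).rank ≤ 1 := by
  rw [r1, Matrix.vecMulVec_eq (Fin 1)]
  calc (Matrix.replicateCol (Fin 1) x * Matrix.replicateRow (Fin 1) x).rank ≤ (Matrix.replicateCol (Fin 1) x).rank :=
        Matrix.rank_mul_le_left _ _
    _ ≤ Fintype.card (Fin 1) := Matrix.rank_le_card_width _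
    _ = 1 := by simp

lemma rank_hyp_le (x y : V → ZMod 2) : (hyp x y).rank ≤ 2 := by
  have h1 : (Matrix.vecMulVec x y).rank ≤ 1 := by
    rw [Matrix.vecMulVec_eq (Fin 1)]
    calc (Matrix.replicateCol (Fin 1) x * Matrix.replicateRow (Fin 1) y).rank ≤ (Matrix.replicateCol (Fin 1) x).rank :=
          Matrix.rank_mul_le_left _ _
      _ ≤ Fintype.card (Fin 1) := Matrix.rank_le_card_width _
      _ = 1 := by simp
  have h2 : (Matrix.vecMulVec y x).rank ≤ 1 := by
    rw [Matrix.vecMulVec_eq (Fin 1)]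
    calc (Matrix.replicateCol (Fin 1) y * Matrix.replicateRow (Fin 1) x).rank ≤ (Matrix.replicateCol (Fin 1) y).rank :=
          Matrix.rank_mul_le_left _ _
      _ ≤ Fintype.card (Fin 1) := Matrix.rank_le_card_width _
      _ = 1 := by simp
  calc (hyp x y).rank ≤ _ := rank_add_le' _ _
    _ ≤ 2 := by omega

lemma rank_listSum_le (k : ℕ) (L : List (Matrix V V (ZMod 2))) (h : ∀ M ∈ L, M.rank ≤ k) :
    L.sum.rank ≤ k * L.length := by
  induction L with
  | nil => simp [Matrix.rank_zero]
  | cons M L ih =>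
    rw [List.sum_cons]
    calc (M + L.sum).rank ≤ M.rank + L.sum.rank := rank_add_le' _ _
      _ ≤ k + k * L.length := add_le_add (h M (by simp)) (ih fun N hN => h N (by simp [hN]))
      _ = k * (M :: L).length := by simp [List.length_cons]; ring


lemma eq_zero_of_rank_eq_zero {A : Matrix V V (ZMod 2)} (h : A.rank = 0) : A = 0 := by
  have hbot : LinearMap.range A.mulVecLin = ⊥ := Submodule.finrank_eq_zero.mp h
  ext i j
  have hcol : A.mulVec (Pi.single j 1) = 0 := by
    have : A.mulVec (Pi.single j 1) ∈ LinearMap.range A.mulVecLin := ⟨_, rfl⟩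
    rwa [hbot, Submodule.mem_bot] at this
  have := congrFun hcol i
  simpa using this

lemma mem_colSp (A : Matrix V V (ZMod 2)) (f : V → ZMod 2) :
    A.mulVec f ∈ LinearMap.range A.mulVecLin := ⟨f, rfl⟩

lemma col_mem_colSp (A : Matrix V V (ZMod 2)) (u : V) :
    (fun i => A i u) ∈ LinearMap.range A.mulVecLin := by
  refine ⟨Pi.single u 1, ?_⟩
  rw [Matrix.mulVecLin_apply]
  ext i; simp

lemma colSp_zero_row {B : Matrix V V (ZMod 2)} {u : V} (h : ∀ w, B u w = 0)
    {g : V → ZMod 2} (hg : g ∈ LinearMap.range B.mulVecLin) : g u = 0 := by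
  obtain ⟨f, rfl⟩ := hg
  rw [Matrix.mulVecLin_apply]
  simp [Matrix.mulVec, dotProduct, h]

lemma zadd_self (a : ZMod 2) : a + a = 0 := by revert a; decide

lemma rank_drop1 (A : Matrix V V (ZMod 2)) (hA : A.IsSymm) {u : V} (hu : A u u = 1) :
    (A + r1 (fun v => A v u)).rank < A.rank := by
  set x : V → ZMod 2 := fun v => A v u with hx
  set B : Matrix V V (ZMod 2) := A + r1 x with hB
  have hrow : ∀ w, B u w = 0 := by
    intro w
    have hsymm : A w u = A u w := (hA.apply w u).symm
    simp only [hB, Matrix.add_apply, r1, Matrix.vecMulVec_apply, hx]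
    rw [hu, one_mul, hsymm]
    exact zadd_self _
  have hxcol : x = A.mulVec (Pi.single u 1) := by ext i; simp [hx]
  have hle : LinearMap.range B.mulVecLin ≤ LinearMap.range A.mulVecLin := by
    rintro w ⟨f, rfl⟩
    rw [Matrix.mulVecLin_apply]
    refine ⟨f + (∑ j, x j * f j) • (Pi.single u 1 : V → ZMod 2), ?_⟩
    rw [Matrix.mulVecLin_apply, Matrix.mulVec_add, Matrix.mulVec_smul, ← hxcol,
      hB, Matrix.add_mulVec, r1, vecMulVec_mulVec]
  have hxA : x ∈ LinearMap.range A.mulVecLin := hxcol ▸ mem_colSp A _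
  have hxB : x ∉ LinearMap.range B.mulVecLin := by
    intro hmem
    have := colSp_zero_row hrow hmem
    rw [show x u = 1 from hu] at this
    exact one_ne_zero this
  have hlt : LinearMap.range B.mulVecLin < LinearMap.range A.mulVecLin :=
    lt_of_le_of_ne hle (fun h => hxB (h ▸ hxA))
  exact Submodule.finrank_lt_finrank_of_lt hlt

lemma rank_drop2 (A : Matrix V V (ZMod 2)) (hA : A.IsSymm) (hd : ∀ w, A w w = 0)
    {u v : V} (huv : A u v = 1) :
    (A + hyp (fun w => A w u) (fun w => A w v)).rank + 2 ≤ A.rank := by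
  set x : V → ZMod 2 := fun w => A w u with hx
  set y : V → ZMod 2 := fun w => A w v with hy
  set B : Matrix V V (ZMod 2) := A + hyp x y with hB
  have hxu : x u = 0 := hd u
  have hyu : y u = A u v := rfl
  have hxv : x v = 1 := (hA.apply u v).trans huv
  have hyv : y v = 0 := hd v
  have hrowu : ∀ w, B u w = 0 := by
    intro w
    simp only [hB, Matrix.add_apply, hyp, Matrix.vecMulVec_apply]
    rw [show x u = 0 from hxu, show y u = A u v from rfl, huv, zero_mul, one_mul,
      show x w = A w u from rfl, show A w u = A u w from (hA.apply w u).symm]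
    rw [zero_add]
    exact zadd_self _
  have hrowv : ∀ w, B v w = 0 := by
    intro w
    simp only [hB, Matrix.add_apply, hyp, Matrix.vecMulVec_apply]
    rw [show x v = 1 from hxv, show y v = 0 from hyv, one_mul, zero_mul, add_zero,
      show y w = A w v from rfl, show A w v = A v w from (hA.apply w v).symm]
    exact zadd_self _
  have hxcol : x = A.mulVec (Pi.single u 1) := by ext i; simp [hx]
  have hycol : y = A.mulVec (Pi.single v 1) := by ext i; simp [hy]
  have hle : LinearMap.range B.mulVecLin ≤ LinearMap.range A.mulVecLin := by
    rintro w ⟨f, rfl⟩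
    rw [Matrix.mulVecLin_apply]
    refine ⟨f + (∑ j, y j * f j) • (Pi.single u 1 : V → ZMod 2) + (∑ j, x j * f j) • (Pi.single v 1 : V → ZMod 2), ?_⟩
    rw [Matrix.mulVecLin_apply, Matrix.mulVec_add, Matrix.mulVec_add, Matrix.mulVec_smul,
      Matrix.mulVec_smul, ← hxcol, ← hycol, hB, Matrix.add_mulVec, hyp, Matrix.add_mulVec,
      vecMulVec_mulVec, vecMulVec_mulVec]
    abel
  have hxA : x ∈ LinearMap.range A.mulVecLin := hxcol ▸ mem_colSp A _
  have hyA : y ∈ LinearMap.range A.mulVecLin := hycol ▸ mem_colSp A _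
  have hzero : ∀ g ∈ LinearMap.range B.mulVecLin, g u = 0 ∧ g v = 0 := fun g hg =>
    ⟨colSp_zero_row hrowu hg, colSp_zero_row hrowv hg⟩
  set C1 : Submodule (ZMod 2) (V → ZMod 2) :=
    LinearMap.range B.mulVecLin ⊔ Submodule.span (ZMod 2) {x} with hC1
  set C2 : Submodule (ZMod 2) (V → ZMod 2) := C1 ⊔ Submodule.span (ZMod 2) {y} with hC2
  have hxB : x ∉ LinearMap.range B.mulVecLin := by
    intro hmem
    have := (hzero x hmem).2
    rw [hxv] at this
    exact one_ne_zero this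
  have h1 : LinearMap.range B.mulVecLin < C1 :=
    lt_of_le_of_ne le_sup_left (fun h => hxB (h ▸ (le_sup_right (a := LinearMap.range B.mulVecLin))
      (Submodule.subset_span rfl)))
  have hyC1 : y ∉ C1 := by
    intro hmem
    rw [hC1, Submodule.mem_sup] at hmem
    obtain ⟨b, hb, s, hs, hbs⟩ := hmem
    obtain ⟨a, rfl⟩ := Submodule.mem_span_singleton.mp hs
    have := congrFun hbs u
    simp only [Pi.add_apply, Pi.smul_apply, smul_eq_mul] at this
    rw [(hzero b hb).1, hxu, mul_zero, add_zero] at this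
    rw [show y u = A u v from rfl, huv] at this
    exact one_ne_zero this.symm
  have h2 : C1 < C2 :=
    lt_of_le_of_ne le_sup_left (fun h => hyC1 (h ▸ (le_sup_right (a := C1))
      (Submodule.subset_span rfl)))
  have hC2le : C2 ≤ LinearMap.range A.mulVecLin := by
    rw [hC2, hC1]
    refine sup_le (sup_le hle ?_) ?_
    · rw [Submodule.span_le, Set.singleton_subset_iff]; exact hxA
    · rw [Submodule.span_le, Set.singleton_subset_iff]; exact hyA
  have f1 := Submodule.finrank_lt_finrank_of_lt h1
  have f2 := Submodule.finrank_lt_finrank_of_lt h2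
  have f3 := Submodule.finrank_mono hC2le
  change Module.finrank (ZMod 2) (LinearMap.range B.mulVecLin) + 2 ≤
    Module.finrank (ZMod 2) (LinearMap.range A.mulVecLin)
  omega


lemma matrix_cancel (A H : Matrix V V (ZMod 2)) : H + (A + H) = A := by
  ext i j
  simp only [Matrix.add_apply]
  exact z2add _ _

lemma alt_decomp : ∀ (n : ℕ) (A : Matrix V V (ZMod 2)), A.rank ≤ n → A.IsSymm →
    (∀ w, A w w = 0) →
    ∃ L : List ((V → ZMod 2) × (V → ZMod 2)),
      A = (L.map fun p => hyp p.1 p.2).sum ∧ 2 * L.length ≤ A.rank := by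
  intro n
  induction n with
  | zero =>
    intro A hr _ _
    have : A = 0 := eq_zero_of_rank_eq_zero (Nat.le_zero.mp hr)
    exact ⟨[], by simp [this], by simp⟩
  | succ n ih =>
    intro A hr hsym hdiag
    by_cases hA0 : A = 0
    · exact ⟨[], by simp [hA0], by simp⟩
    · have hex : ∃ u v, A u v ≠ 0 := by
        by_contra hc
        push_neg at hc
        exact hA0 (by ext i j; simpa using hc i j)
      obtain ⟨u, v, huv0⟩ := hex
      have huv : A u v = 1 := (z2 (A u v)).resolve_left huv0
      set x : V → ZMod 2 := fun w => A w u with hx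
      set y : V → ZMod 2 := fun w => A w v with hy
      set B : Matrix V V (ZMod 2) := A + hyp x y with hB
      have hdrop : B.rank + 2 ≤ A.rank := rank_drop2 A hsym hdiag huv
      have hBsym : B.IsSymm := by
        refine hsym.add ?_
        exact isSymm_hyp x y
      have hBdiag : ∀ w, B w w = 0 := by
        intro w
        simp only [hB, Matrix.add_apply, hyp, Matrix.vecMulVec_apply, hdiag w, zero_add]
        rw [mul_comm]
        exact zadd_self _
      obtain ⟨L, hLsum, hLlen⟩ := ih B (by omega) hBsym hBdiag
      refine ⟨(x, y) :: L, ?_, ?_⟩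
      · rw [List.map_cons, List.sum_cons, ← hLsum]
        exact (matrix_cancel A (hyp x y)).symm
      · simp only [List.length_cons]
        omega

def merge : (V → ZMod 2) → List ((V → ZMod 2) × (V → ZMod 2)) → List (V → ZMod 2)
  | x, [] => [x]
  | x, p :: L => (x + p.1) :: (x + p.2) :: merge (x + p.1 + p.2) L

lemma merge_length (L : List ((V → ZMod 2) × (V → ZMod 2))) :
    ∀ x, (merge x L).length = 1 + 2 * L.length := by
  induction L with
  | nil => intro x; simp [merge]
  | cons p L ih => intro x; simp [merge, ih]; omega

lemma key_ident (x y z : V → ZMod 2) :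
    r1 (x + y) + r1 (x + z) + r1 (x + y + z) = r1 x + hyp y z := by
  ext i j
  simp only [r1, hyp, Matrix.add_apply, Matrix.vecMulVec_apply, Pi.add_apply]
  have h : ∀ a b c d e f : ZMod 2,
      (a + c) * (b + d) + (a + e) * (b + f) + (a + c + e) * (b + d + f)
        = a * b + (c * f + e * d) := by decide
  exact h (x i) (x j) (y i) (y j) (z i) (z j)

lemma merge_sum (L : List ((V → ZMod 2) × (V → ZMod 2))) :
    ∀ x, ((merge x L).map r1).sum = r1 x + (L.map fun p => hyp p.1 p.2).sum := by
  induction L with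
  | nil => intro x; simp [merge]
  | cons p L ih =>
    intro x
    rw [show merge x (p :: L) = (x + p.1) :: (x + p.2) :: merge (x + p.1 + p.2) L from rfl]
    rw [List.map_cons, List.map_cons, List.sum_cons, List.sum_cons, ih,
      List.map_cons, List.sum_cons, ← add_assoc, ← add_assoc, key_ident, add_assoc]

lemma nonalt_decomp : ∀ (n : ℕ) (A : Matrix V V (ZMod 2)), A.rank ≤ n → A.IsSymm →
    (∃ u, A u u = 1) →
    ∃ L : List (V → ZMod 2), A = (L.map r1).sum ∧ L.length ≤ A.rank := by
  intro n
  induction n with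
  | zero =>
    intro A hr _ hu
    obtain ⟨u, hu⟩ := hu
    have : A = 0 := eq_zero_of_rank_eq_zero (Nat.le_zero.mp hr)
    rw [this] at hu
    exact absurd (by simpa using hu : (0 : ZMod 2) = 1) (by decide)
  | succ n ih =>
    intro A hr hsym hu
    obtain ⟨u, hu⟩ := hu
    set x : V → ZMod 2 := fun w => A w u with hx
    set B : Matrix V V (ZMod 2) := A + r1 x with hB
    have hdrop : B.rank < A.rank := rank_drop1 A hsym hu
    have hBsym : B.IsSymm := hsym.add (isSymm_r1 x)
    have hAeq : A = r1 x + B := (matrix_cancel A (r1 x)).symm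
    by_cases hBd : ∃ w, B w w = 1
    · obtain ⟨L, hLsum, hLlen⟩ := ih B (by omega) hBsym hBd
      refine ⟨x :: L, ?_, ?_⟩
      · rw [List.map_cons, List.sum_cons, ← hLsum]; exact hAeq
      · simp only [List.length_cons]; omega
    · have hBdiag : ∀ w, B w w = 0 := by
        intro w
        rcases z2 (B w w) with h | h
        · exact h
        · exact absurd ⟨w, h⟩ hBd
      obtain ⟨L, hLsum, hLlen⟩ := alt_decomp B.rank B le_rfl hBsym hBdiag
      refine ⟨merge x L, ?_, ?_⟩
      · rw [merge_sum, ← hLsum]; exact hAeq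
      · rw [merge_length]; omega


lemma cast_parity (n : ℕ) : ((n : ZMod 2) = 1) ↔ Odd n := by
  rw [Nat.odd_iff, ← ZMod.natCast_mod n 2]
  rcases Nat.mod_two_eq_zero_or_one n with h | h <;> rw [h] <;> simp <;> decide

lemma key_count {α : Type*} (g : α → ZMod 2) (p : α → Prop) [DecidablePred p]
    (h : ∀ a, g a = 1 ↔ p a) :
    ∀ L : List α, (L.map g).sum = ((L.filter fun a => decide (p a)).length : ZMod 2) := by
  intro L
  induction L with
  | nil => simp
  | cons a L ih =>
    by_cases hp : p a
    · rw [List.map_cons, List.sum_cons, ih, List.filter_cons,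
        if_pos (by simpa using hp), (h a).mpr hp, List.length_cons]
      push_cast
      ring
    · have hg : g a = 0 := (z2 (g a)).resolve_right (fun h1 => hp ((h a).mp h1))
      rw [List.map_cons, List.sum_cons, ih, List.filter_cons, if_neg (by simpa using hp), hg,
        zero_add]

lemma key_count_finset {ι : Type*} [Fintype ι] (g : ι → ZMod 2) (p : ι → Prop)
    [DecidablePred p] (h : ∀ i, g i = 1 ↔ p i) :
    (∑ i, g i) = ((Finset.univ.filter p).card : ZMod 2) := by
  rw [← Finset.sum_boole]
  refine Finset.sum_congr rfl fun i _ => ?_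
  by_cases hp : p i
  · rw [if_pos hp, (h i).mpr hp]
  · rw [if_neg hp]
    exact (z2 (g i)).resolve_right (fun h1 => hp ((h i).mp h1))

lemma sum_r1_apply (L : List (V → ZMod 2)) (u v : V) :
    ((L.map r1).sum) u v = (L.map fun w => w u * w v).sum := by
  induction L with
  | nil => simp [Matrix.zero_apply]
  | cons w L ih =>
    simp only [List.map_cons, List.sum_cons, Matrix.add_apply, r1, Matrix.vecMulVec_apply, ih]

lemma sum_hyp_apply (L : List ((V → ZMod 2) × (V → ZMod 2))) (u v : V) :
    ((L.map fun p => hyp p.1 p.2).sum) u v = (L.map fun p => p.1 u * p.2 v + p.2 u * p.1 v).sum := by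
  induction L with
  | nil => simp [Matrix.zero_apply]
  | cons w L ih =>
    rw [List.map_cons, List.sum_cons, List.map_cons, List.sum_cons, Matrix.add_apply, ih]
    simp [hyp, Matrix.add_apply, Matrix.vecMulVec_apply]

lemma length_filter_map {α β : Type*} (f : α → β) (p : β → Bool) :
    ∀ L : List α, ((L.map f).filter p).length = (L.filter fun a => p (f a)).length := by
  intro L
  induction L with
  | nil => simp
  | cons a L ih =>
    rw [List.map_cons, List.filter_cons, List.filter_cons]
    by_cases hp : p (f a) = true
    · rw [if_pos hp, if_pos hp, List.length_cons, List.length_cons, ih]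
    · rw [if_neg hp, if_neg hp, ih]

/-- the support set of a vector -/
def vset (w : V → ZMod 2) : Finset V := Finset.univ.filter fun v => w v = 1

lemma scs_of_decomp (G : SimpleGraph V) (A : Matrix V V (ZMod 2)) (hfit : FitsF2 G A)
    (L : List (V → ZMod 2)) (hA : A = (L.map r1).sum) :
    IsSCS G ((L.map vset : List (Finset V)) : Multiset (Finset V)) := by
  intro u v huv
  rw [← hfit.2 u v huv]
  have h1 : A u v = ((L.filter fun w => decide (w u = 1 ∧ w v = 1)).length : ZMod 2) := by
    rw [hA, sum_r1_apply]
    exact key_count _ (fun w => w u = 1 ∧ w v = 1) (fun w => mul_eq_one_iff _ _) L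
  have h2 : Multiset.card (((L.map vset : List (Finset V)) : Multiset (Finset V)).filter
      (fun C => u ∈ C ∧ v ∈ C)) = (L.filter fun w => decide (w u = 1 ∧ w v = 1)).length := by
    rw [Multiset.filter_coe, Multiset.coe_card, length_filter_map]
    congr 1
    refine List.filter_congr fun w _ => ?_
    simp [vset]
  have h3 : A u v = ((Multiset.card ((((L.map vset : List (Finset V)) : Multiset (Finset V))).filter
      (fun C => u ∈ C ∧ v ∈ C))) : ZMod 2) := by rw [h1, h2]
  rw [h3, cast_parity]

/-- indicator vector of a finset -/
def ind (C : Finset V) : V → ZMod 2 := fun v => if v ∈ C then 1 else 0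

lemma decomp_of_scs (G : SimpleGraph V) (𝒞 : Multiset (Finset V)) (hscs : IsSCS G 𝒞) :
    ∃ A : Matrix V V (ZMod 2), FitsF2 G A ∧ A.rank ≤ Multiset.card 𝒞 := by
  set L : List (Finset V) := 𝒞.toList with hL
  set A : Matrix V V (ZMod 2) := ((L.map ind).map r1).sum with hA
  have hind : ∀ (C : Finset V) (w : V), ind C w = 1 ↔ w ∈ C := by
    intro C w
    simp only [ind]
    split <;> simp_all
  have hsym : A.IsSymm := by
    refine isSymm_listSum _ fun M hM => ?_
    obtain ⟨x, _, rfl⟩ := List.mem_map.mp hM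
    exact isSymm_r1 x
  have hentry : ∀ u v : V, A u v =
      ((L.filter fun C => decide (u ∈ C ∧ v ∈ C)).length : ZMod 2) := by
    intro u v
    rw [hA, sum_r1_apply, List.map_map]
    refine (key_count (fun C => ind C u * ind C v) (fun C => u ∈ C ∧ v ∈ C) ?_ L)
    intro C
    rw [mul_eq_one_iff, hind, hind]
  have hcard : ∀ u v : V,
      (L.filter fun C => decide (u ∈ C ∧ v ∈ C)).length =
        Multiset.card (𝒞.filter fun C => u ∈ C ∧ v ∈ C) := by
    intro u v
    have : 𝒞 = (L : Multiset (Finset V)) := (Multiset.coe_toList 𝒞).symm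
    rw [this, Multiset.filter_coe, Multiset.coe_card]
  refine ⟨A, ⟨hsym, ?_⟩, ?_⟩
  · intro u v huv
    rw [hscs u v huv, hentry u v, cast_parity, hcard u v]
  · have hr : A.rank ≤ 1 * ((L.map ind).map r1).length := by
      refine rank_listSum_le 1 ((L.map ind).map r1) fun M hM => ?_
      obtain ⟨x, _, rfl⟩ := List.mem_map.mp hM
      exact rank_r1_le x
    rw [List.length_map, List.length_map, one_mul, hL, Multiset.length_toList] at hr
    exact hr


/-- the three parts induced by a pair of vectors -/
def pts (x y : V → ZMod 2) : Finset V × Finset V × Finset V :=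
  (Finset.univ.filter fun w => x w = 1 ∧ y w = 1,
   Finset.univ.filter fun w => x w = 1 ∧ y w = 0,
   Finset.univ.filter fun w => x w = 0 ∧ y w = 1)

lemma entry_iff (x y : V → ZMod 2) (u v : V) : (hyp x y) u v = 1 ↔ TripAdj (pts x y) u v := by
  simp only [hyp, Matrix.add_apply, Matrix.vecMulVec_apply, TripAdj, pts, Finset.mem_filter,
    Finset.mem_univ, true_and]
  generalize x u = a
  generalize y u = b
  generalize x v = c
  generalize y v = d
  revert a b c d
  decide

lemma pts_disjoint (x y : V → ZMod 2) :
    Disjoint (pts x y).1 (pts x y).2.1 ∧ Disjoint (pts x y).1 (pts x y).2.2 ∧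
      Disjoint (pts x y).2.1 (pts x y).2.2 := by
  refine ⟨?_, ?_, ?_⟩ <;>
    · rw [Finset.disjoint_left]
      intro w hw1 hw2
      simp only [pts, Finset.mem_filter, Finset.mem_univ, true_and] at hw1 hw2
      simp_all

lemma tripAdj_congr (P Q : Finset V × Finset V × Finset V)
    (h : ∀ w, (w ∈ P.1 ↔ w ∈ Q.1) ∧ (w ∈ P.2.1 ↔ w ∈ Q.2.1) ∧ (w ∈ P.2.2 ↔ w ∈ Q.2.2))
    (u v : V) : TripAdj P u v ↔ TripAdj Q u v := by
  obtain ⟨hu1, hu2, hu3⟩ := h u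
  obtain ⟨hv1, hv2, hv3⟩ := h v
  unfold TripAdj
  rw [hu1, hu2, hu3, hv1, hv2, hv3]

lemma trip_of_decomp (G : SimpleGraph V) (A : Matrix V V (ZMod 2)) (hfit : FitsF2 G A)
    (L : List ((V → ZMod 2) × (V → ZMod 2))) (hA : A = (L.map fun p => hyp p.1 p.2).sum) :
    IsTripartiteSystem G (fun i : Fin L.length => pts (L.get i).1 (L.get i).2) := by
  constructor
  · intro i
    exact pts_disjoint _ _
  · intro u v huv
    rw [← hfit.2 u v huv]
    have hsum : A = ∑ i : Fin L.length, hyp (L.get i).1 (L.get i).2 := by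
      conv_lhs => rw [hA, ← List.ofFn_get L]
      rw [List.map_ofFn, List.sum_ofFn]
      simp [Function.comp]
    have hentry : A u v = ∑ i : Fin L.length, (hyp (L.get i).1 (L.get i).2) u v := by
      rw [hsum, Matrix.sum_apply]
    rw [hentry, key_count_finset _ (fun i => TripAdj (pts (L.get i).1 (L.get i).2) u v)
      (fun i => entry_iff _ _ u v), cast_parity]

lemma decomp_of_trip (G : SimpleGraph V) {l : ℕ} (T : Fin l → Finset V × Finset V × Finset V)
    (hT : IsTripartiteSystem G T) :
    ∃ A : Matrix V V (ZMod 2), FitsF2 G A ∧ A.rank ≤ 2 * l := by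
  set x : Fin l → V → ZMod 2 := fun i w => if w ∈ (T i).1 ∨ w ∈ (T i).2.1 then 1 else 0 with hx
  set y : Fin l → V → ZMod 2 := fun i w => if w ∈ (T i).1 ∨ w ∈ (T i).2.2 then 1 else 0 with hy
  set A : Matrix V V (ZMod 2) := ∑ i : Fin l, hyp (x i) (y i) with hA
  have hmem : ∀ i w, (w ∈ (pts (x i) (y i)).1 ↔ w ∈ (T i).1) ∧
      (w ∈ (pts (x i) (y i)).2.1 ↔ w ∈ (T i).2.1) ∧
      (w ∈ (pts (x i) (y i)).2.2 ↔ w ∈ (T i).2.2) := by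
    intro i w
    obtain ⟨h12, h13, h23⟩ := hT.1 i
    have d12 := Finset.disjoint_left.mp h12
    have d13 := Finset.disjoint_left.mp h13
    have d23 := Finset.disjoint_left.mp h23
    simp only [pts, Finset.mem_filter, Finset.mem_univ, true_and, hx, hy]
    by_cases hw1 : w ∈ (T i).1 <;> by_cases hw2 : w ∈ (T i).2.1 <;>
        by_cases hw3 : w ∈ (T i).2.2 <;>
      first
        | exact absurd hw2 (d12 hw1)
        | exact absurd hw3 (d13 hw1)
        | exact absurd hw3 (d23 hw2)
        | (simp only [hw1, hw2, hw3, or_true, true_or, or_self, or_false, false_or,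
            if_true, if_false, iff_true, iff_false]
           refine ⟨?_, ?_, ?_⟩ <;> simp <;> decide)
  have hsym : A.IsSymm := by
    rw [hA]
    show Matrix.transpose _ = _
    rw [Matrix.transpose_sum]
    exact Finset.sum_congr rfl fun i _ => isSymm_hyp (x i) (y i)
  refine ⟨A, ⟨hsym, ?_⟩, ?_⟩
  · intro u v huv
    rw [(hT.2 u v huv)]
    have hentry : A u v = ∑ i : Fin l, (hyp (x i) (y i)) u v := by rw [hA, Matrix.sum_apply]
    have hkey : ∀ i, (hyp (x i) (y i)) u v = 1 ↔ TripAdj (T i) u v := by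
      intro i
      rw [entry_iff, tripAdj_congr _ _ (hmem i)]
    rw [hentry, key_count_finset _ (fun i => TripAdj (T i) u v) hkey, cast_parity]
  · have h1 : A = (List.ofFn fun i : Fin l => hyp (x i) (y i)).sum := by
      rw [List.sum_ofFn, hA]
    have h2 : (List.ofFn fun i : Fin l => hyp (x i) (y i)).sum.rank ≤
        2 * (List.ofFn fun i : Fin l => hyp (x i) (y i)).length := by
      refine rank_listSum_le 2 _ fun M hM => ?_
      obtain ⟨i, rfl⟩ := List.mem_ofFn.mp hM
      exact rank_hyp_le _ _
    rw [h1]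
    calc _ ≤ _ := h2
      _ = 2 * l := by rw [List.length_ofFn]


/-- adjacency matrix over F2 -/
def adjM (G : SimpleGraph V) [DecidableRel G.Adj] : Matrix V V (ZMod 2) :=
  Matrix.of fun u v => if G.Adj u v then 1 else 0

lemma adjM_symm (G : SimpleGraph V) [DecidableRel G.Adj] : (adjM G).IsSymm := by
  ext i j
  simp only [adjM, Matrix.transpose_apply, Matrix.of_apply]
  have h : G.Adj j i ↔ G.Adj i j := G.adj_comm j i
  simp [h]

lemma adjM_diag (G : SimpleGraph V) [DecidableRel G.Adj] : ∀ u, adjM G u u = 0 := by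
  intro u
  simp [adjM]

lemma adjM_fits (G : SimpleGraph V) [DecidableRel G.Adj] : FitsF2 G (adjM G) := by
  refine ⟨adjM_symm G, fun u v _ => ?_⟩
  simp only [adjM, Matrix.of_apply]
  split <;> simp_all

lemma adjM1_fits (G : SimpleGraph V) [DecidableRel G.Adj] : FitsF2 G (adjM G + 1) := by
  constructor
  · exact (adjM_symm G).add (Matrix.isSymm_one)
  · intro u v huv
    rw [Matrix.add_apply, Matrix.one_apply_ne huv, add_zero]
    exact (adjM_fits G).2 u v huv

lemma adjM1_diag (G : SimpleGraph V) [DecidableRel G.Adj] : ∀ u, (adjM G + 1) u u = 1 := by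
  intro u
  rw [Matrix.add_apply, adjM_diag, Matrix.one_apply_eq, zero_add]

end SCSAux

open SCSAux

theorem stmt13 {V : Type*} [Fintype V] [DecidableEq V] (G : SimpleGraph V) :
    mrF2 G = min (c2 G) (2 * t2 G) := by
  classical
  have hmrS : {k | ∃ A : Matrix V V (ZMod 2), FitsF2 G A ∧ A.rank = k}.Nonempty :=
    ⟨(adjM G).rank, adjM G, adjM_fits G, rfl⟩
  have ht2S : {l | ∃ T : Fin l → Finset V × Finset V × Finset V, IsTripartiteSystem G T}.Nonempty := by
    obtain ⟨L, hsum, _⟩ := alt_decomp (adjM G).rank (adjM G) le_rfl (adjM_symm G) (adjM_diag G)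
    exact ⟨L.length, _, trip_of_decomp G (adjM G) (adjM_fits G) L hsum⟩
  have hc2S : {k | ∃ 𝒞 : Multiset (Finset V), IsSCS G 𝒞 ∧ Multiset.card 𝒞 = k}.Nonempty := by
    rcases isEmpty_or_nonempty V with hV | hV
    · exact ⟨0, 0, fun u => (IsEmpty.false u).elim, rfl⟩
    · obtain ⟨u⟩ := hV
      obtain ⟨L, hsum, _⟩ := nonalt_decomp (adjM G + 1).rank (adjM G + 1) le_rfl
        (adjM1_fits G).1 ⟨u, adjM1_diag G u⟩
      exact ⟨Multiset.card ((L.map vset : List (Finset V)) : Multiset (Finset V)),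
        _, scs_of_decomp G (adjM G + 1) (adjM1_fits G) L hsum, rfl⟩
  have h1 : mrF2 G ≤ c2 G := by
    obtain ⟨𝒞, hscs, hcard⟩ := Nat.sInf_mem hc2S
    obtain ⟨A, hfit, hrank⟩ := decomp_of_scs G 𝒞 hscs
    calc mrF2 G ≤ A.rank := Nat.sInf_le ⟨A, hfit, rfl⟩
      _ ≤ Multiset.card 𝒞 := hrank
      _ = c2 G := hcard
  have h2 : mrF2 G ≤ 2 * t2 G := by
    obtain ⟨T, hT⟩ := Nat.sInf_mem ht2S
    obtain ⟨A, hfit, hrank⟩ := decomp_of_trip G T hT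
    calc mrF2 G ≤ A.rank := Nat.sInf_le ⟨A, hfit, rfl⟩
      _ ≤ 2 * t2 G := hrank
  have h3 : min (c2 G) (2 * t2 G) ≤ mrF2 G := by
    obtain ⟨A, hfit, hrank⟩ := Nat.sInf_mem hmrS
    by_cases hd : ∃ u, A u u = 1
    · obtain ⟨L, hsum, hlen⟩ := nonalt_decomp A.rank A le_rfl hfit.1 hd
      have hc2le : c2 G ≤ L.length := by
        have hmem : L.length ∈ {k | ∃ 𝒞 : Multiset (Finset V), IsSCS G 𝒞 ∧ Multiset.card 𝒞 = k} :=
          ⟨((L.map vset : List (Finset V)) : Multiset (Finset V)), scs_of_decomp G A hfit L hsum,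
            by rw [Multiset.coe_card, List.length_map]⟩
        exact Nat.sInf_le hmem
      calc min (c2 G) (2 * t2 G) ≤ c2 G := min_le_left _ _
        _ ≤ L.length := hc2le
        _ ≤ A.rank := hlen
        _ = mrF2 G := hrank
    · have hdiag : ∀ u, A u u = 0 := by
        intro u
        rcases z2 (A u u) with h | h
        · exact h
        · exact absurd ⟨u, h⟩ hd
      obtain ⟨L, hsum, hlen⟩ := alt_decomp A.rank A le_rfl hfit.1 hdiag
      have ht2le : t2 G ≤ L.length :=
        Nat.sInf_le ⟨_, trip_of_decomp G A hfit L hsum⟩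
      calc min (c2 G) (2 * t2 G) ≤ 2 * t2 G := min_le_right _ _
        _ ≤ 2 * L.length := by omega
        _ ≤ A.rank := hlen
        _ = mrF2 G := hrank
  have := le_min h1 h2
  omega
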